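/- arXiv:math/9312206 — 5 statements merged into one kernel-verified Lean document; each statement's English description precedes it below -/
import Mathlib

section
/- Let X be a normed space, g : ℕ≥1 → ℝ>0 a nondecreasing function, and c > 0 a constant such that for all n and all x₁,…,x_n ∈ X one has ∑_{i=1}^n ‖x_i‖ ≤ c · (n/g(n)) · sup_{ε_i = ±1} ‖∑_{i=1}^n ε_i x_i‖. Then for every finite sequence x₁,…,x_n ∈ X, the nonincreasing rearrangement (a_k^*) of (‖x_k‖)_{k=1}^n satisfies sup_{1≤k≤n} g(k) · a_k^* ≤ c · sup_{x* ∈ B_{X*}} ∑_{i=1}^n |⟨x*, x_i⟩|. -/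
/-- If `∑ ‖x_i‖ ≤ c (n / g(n)) sup_{ε=±1} ‖∑ ε_i x_i‖` holds in a normed space `X`,
then for any `x_1, …, x_n` the nonincreasing rearrangement `(a_k^*)` of `(‖x_k‖)`
satisfies `g(k) a_k^* ≤ c · sup_{x* ∈ B_{X*}} ∑ |⟨x*, x_i⟩|` for all `k`. -/
theorem stmt5 {X : Type*} [NormedAddCommGroup X] [NormedSpace ℝ X]
    (g : ℕ → ℝ) (hgpos : ∀ n : ℕ, 1 ≤ n → 0 < g n)
    (hgmono : ∀ m n : ℕ, 1 ≤ m → m ≤ n → g m ≤ g n)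
    (c : ℝ) (hc : 0 < c)
    (H : ∀ (n : ℕ) (x : Fin n → X),
      ∑ i, ‖x i‖ ≤ c * ((n : ℝ) / g n) *
        (Finset.univ.sup' Finset.univ_nonempty
          (fun ε : Fin n → Bool => ‖∑ i, (if ε i then x i else -x i)‖))) :
    ∀ (n : ℕ) (x : Fin n → X) (σ : Equiv.Perm (Fin n)),
      (∀ i j : Fin n, i ≤ j → ‖x (σ j)‖ ≤ ‖x (σ i)‖) →
      ∀ k : Fin n, g (k + 1) * ‖x (σ k)‖ ≤
        c * ⨆ f : {f : X →L[ℝ] ℝ // ‖f‖ ≤ 1}, ∑ i, |f.1 (x i)| := by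
  intro n x σ hsort k
  set S := ⨆ f : {f : X →L[ℝ] ℝ // ‖f‖ ≤ 1}, ∑ i, |f.1 (x i)| with hS
  -- boundedness of the dual supremum
  have hb : BddAbove (Set.range fun f : {f : X →L[ℝ] ℝ // ‖f‖ ≤ 1} => ∑ i, |f.1 (x i)|) := by
    refine ⟨∑ i, ‖x i‖, ?_⟩
    rintro _ ⟨f, rfl⟩
    refine Finset.sum_le_sum fun i _ => ?_
    calc |f.1 (x i)| = ‖f.1 (x i)‖ := (Real.norm_eq_abs _).symm
      _ ≤ ‖f.1‖ * ‖x i‖ := f.1.le_opNorm _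
      _ ≤ 1 * ‖x i‖ := by
          exact mul_le_mul_of_nonneg_right f.2 (norm_nonneg _)
      _ = ‖x i‖ := one_mul _
  have hS0 : 0 ≤ S := by
    have := le_ciSup hb (⟨0, by simp⟩ : {f : X →L[ℝ] ℝ // ‖f‖ ≤ 1})
    simpa using this
  -- key: any signed sum of a subfamily is bounded by S
  have key : ∀ (m : ℕ) (e : Fin m → Fin n), Function.Injective e →
      ∀ ε : Fin m → Bool,
      ‖∑ i, (if ε i then x (e i) else -(x (e i)))‖ ≤ S := by
    intro m e he ε
    set v := ∑ i, (if ε i then x (e i) else -(x (e i))) with hv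
    by_cases hv0 : v = 0
    · simpa [hv0] using hS0
    · obtain ⟨f, hf1, hfv⟩ := exists_dual_vector ℝ v (norm_ne_zero_iff.mpr hv0)
      have hfle : ‖f‖ ≤ 1 := le_of_eq hf1
      have h1 : ‖v‖ = f v := by
        have := hfv
        simpa using this.symm
      have h2 : f v ≤ ∑ i, |f (x (e i))| := by
        rw [hv]
        simp only [map_sum]
        refine Finset.sum_le_sum fun i _ => ?_
        by_cases hε : ε i
        · simp [hε, le_abs_self]
        · have hmn' : f (-(x (e i))) = -(f (x (e i))) := map_neg f _
          rw [if_neg hε, hmn']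
          exact neg_le_abs (f (x (e i)))
      have h3 : ∑ i, |f (x (e i))| ≤ ∑ j, |f (x j)| := by
        rw [show (∑ i, |f (x (e i))|) = ∑ j ∈ Finset.univ.image e, |f (x j)| from
          (Finset.sum_image (g := e) (f := fun j => |f (x j)|) (fun a _ b _ h => he h)).symm]
        exact Finset.sum_le_sum_of_subset_of_nonneg (Finset.subset_univ _)
          (fun _ _ _ => abs_nonneg _)
      have h4 : ∑ j, |f (x j)| ≤ S :=
        le_ciSup hb (⟨f, hfle⟩ : {f : X →L[ℝ] ℝ // ‖f‖ ≤ 1})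
      linarith
  -- apply H to the first k+1 elements
  set m := (k : ℕ) + 1 with hm
  have hmn : m ≤ n := k.isLt
  set e : Fin m → Fin n := fun i => σ (Fin.castLE hmn i) with he
  have heinj : Function.Injective e :=
    σ.injective.comp (Fin.castLE_injective hmn)
  have hHm := H m (fun i => x (e i))
  have hsup : (Finset.univ.sup' Finset.univ_nonempty
      (fun ε : Fin m → Bool => ‖∑ i, (if ε i then x (e i) else -(x (e i)))‖)) ≤ S :=
    Finset.sup'_le _ _ fun ε _ => key m e heinj ε
  have hgm : 0 < g m := hgpos m (Nat.le_add_left 1 _)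
  have hmpos : (0:ℝ) < m := by positivity
  -- lower bound on the partial sum
  have hlow : (m : ℝ) * ‖x (σ k)‖ ≤ ∑ i, ‖x (e i)‖ := by
    have : ∀ i : Fin m, ‖x (σ k)‖ ≤ ‖x (e i)‖ := by
      intro i
      refine hsort (Fin.castLE hmn i) k ?_
      exact Nat.lt_succ_iff.mp i.isLt
    calc (m : ℝ) * ‖x (σ k)‖ = ∑ _i : Fin m, ‖x (σ k)‖ := by
          simp [Finset.sum_const, mul_comm]
      _ ≤ ∑ i, ‖x (e i)‖ := Finset.sum_le_sum fun i _ => this i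
  -- combine
  have hchain : ∑ i, ‖x (e i)‖ ≤ c * ((m:ℝ) / g m) * S := by
    refine hHm.trans ?_
    have : (0:ℝ) ≤ c * ((m:ℝ) / g m) := by positivity
    exact mul_le_mul_of_nonneg_left hsup this
  have : (m : ℝ) * ‖x (σ k)‖ ≤ c * ((m:ℝ) / g m) * S := hlow.trans hchain
  -- divide by m, multiply by g m
  have h5 : ‖x (σ k)‖ ≤ c * S / g m := by
    refine le_of_mul_le_mul_left ?_ hmpos
    calc (m:ℝ) * ‖x (σ k)‖ ≤ c * ((m:ℝ) / g m) * S := this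
      _ = (m:ℝ) * (c * S / g m) := by ring
  have hfinal : g m * ‖x (σ k)‖ ≤ c * S := by
    have := (le_div_iff₀ hgm).mp h5
    linarith [this, mul_comm (g m) ‖x (σ k)‖]
  simpa [hm] using hfinal
end

section
/- Let H be a Hilbert space, X a normed space, and T : H → X a bounded linear operator with a_n(T) > α > 0, where a_n denotes the n-th approximation number. Then there exists an orthonormal family (w_j)_{j=1}^n in H such that ‖T w_j‖ ≥ α for every j = 1,…,n. -/
universe u v

private lemma stmt11_step {H : Type u} [NormedAddCommGroup H] [InnerProductSpace ℝ H]
    [CompleteSpace H] {X : Type v} [NormedAddCommGroup X] [NormedSpace ℝ X]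
    (T : H →L[ℝ] X) (n : ℕ) (α : ℝ) (hα : 0 < α)
    (hT : α < sInf {c : ℝ | ∃ S : H →L[ℝ] X,
      LinearMap.rank (S : H →ₗ[ℝ] X) < (n : Cardinal) ∧ c = ‖T - S‖})
    (m : ℕ) (hm : m < n) (w : Fin m → H) (hw : Orthonormal ℝ w)
    (hwT : ∀ j, α ≤ ‖T (w j)‖) :
    ∃ u : H, ‖u‖ = 1 ∧ (∀ j, inner ℝ (w j) u = (0:ℝ)) ∧ α ≤ ‖T u‖ := by
  set K : Submodule ℝ H := Submodule.span ℝ (Set.range w) with hK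
  haveI : FiniteDimensional ℝ K := FiniteDimensional.span_of_finite ℝ (Set.finite_range w)
  set S : H →L[ℝ] X := T.comp (K.subtypeL.comp (Submodule.orthogonalProjection K)) with hS
  have hrank : LinearMap.rank (S : H →ₗ[ℝ] X) < (n : Cardinal) := by
    have hmk : Cardinal.mk (Set.range w) ≤ (m : Cardinal) := by
      have h := Cardinal.mk_range_le_lift (f := w)
      simpa [Cardinal.mk_fin] using h
    have hmid : LinearMap.rank (((K.subtypeL.comp (Submodule.orthogonalProjection K)) : H →L[ℝ] H) :
        H →ₗ[ℝ] H) ≤ (m : Cardinal) := by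
      calc LinearMap.rank (((K.subtypeL.comp (Submodule.orthogonalProjection K)) : H →L[ℝ] H) :
            H →ₗ[ℝ] H)
          ≤ LinearMap.rank (K.subtype) := by
            rw [ContinuousLinearMap.toLinearMap_comp]
            exact LinearMap.rank_comp_le_left _ _
        _ ≤ Module.rank ℝ K := LinearMap.rank_le_domain _
        _ ≤ Cardinal.mk (Set.range w) := rank_span_le _
        _ ≤ (m : Cardinal) := hmk
    have hlift : Cardinal.lift.{u} (LinearMap.rank (S : H →ₗ[ℝ] X)) ≤
        Cardinal.lift.{v} (LinearMap.rank (((K.subtypeL.comp (Submodule.orthogonalProjection K)) :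
          H →L[ℝ] H) : H →ₗ[ℝ] H)) := by
      rw [hS, ContinuousLinearMap.toLinearMap_comp]
      exact LinearMap.lift_rank_comp_le_right _ _
    refine Cardinal.lift_lt.mp (lt_of_le_of_lt (hlift.trans (Cardinal.lift_le.mpr hmid)) ?_)
    rw [Cardinal.lift_natCast, Cardinal.lift_natCast]
    exact_mod_cast hm
  have hbdd : BddBelow {c : ℝ | ∃ S : H →L[ℝ] X,
      LinearMap.rank (S : H →ₗ[ℝ] X) < (n : Cardinal) ∧ c = ‖T - S‖} := by
    refine ⟨0, fun c hc => ?_⟩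
    obtain ⟨S', -, rfl⟩ := hc
    positivity
  have h1 : α < ‖T - S‖ :=
    lt_of_lt_of_le hT (csInf_le hbdd ⟨S, hrank, rfl⟩)
  have hx : ∃ x : H, α * ‖x‖ < ‖(T - S) x‖ := by
    by_contra hcon
    push_neg at hcon
    exact absurd (ContinuousLinearMap.opNorm_le_bound _ hα.le hcon) (not_le.2 h1)
  obtain ⟨x, hx⟩ := hx
  set y : H := x - (Submodule.orthogonalProjection K x : H) with hy
  have hTy : (T - S) x = T y := by
    simp [hS, hy, map_sub]
  rw [hTy] at hx
  have hyK : y ∈ Kᗮ := K.sub_starProjection_mem_orthogonal x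
  have hy0 : y ≠ 0 := by
    rintro h
    rw [h] at hx
    simp only [map_zero, norm_zero] at hx
    exact absurd hx (not_lt.2 (by positivity))
  have hyx : ‖y‖ ≤ ‖x‖ := by
    have hval : (Submodule.orthogonalProjection Kᗮ x : H) = y := by
      exact K.starProjection_orthogonal_val x
    calc ‖y‖ = ‖(Submodule.orthogonalProjection Kᗮ x : H)‖ := by rw [hval]
      _ ≤ ‖Submodule.orthogonalProjection Kᗮ‖ * ‖x‖ := (Submodule.orthogonalProjection Kᗮ).le_opNorm x
      _ ≤ 1 * ‖x‖ :=
          mul_le_mul_of_nonneg_right (Submodule.orthogonalProjectionOnto_norm_le _) (norm_nonneg x)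
      _ = ‖x‖ := one_mul _
  have hypos : (0:ℝ) < ‖y‖ := norm_pos_iff.mpr hy0
  refine ⟨‖y‖⁻¹ • y, norm_smul_inv_norm hy0, fun j => ?_, ?_⟩
  · exact Submodule.inner_right_of_mem_orthogonal
      (Submodule.subset_span (Set.mem_range_self j)) (Kᗮ.smul_mem _ hyK)
  · have hαy : α * ‖y‖ ≤ ‖T y‖ :=
      le_trans (mul_le_mul_of_nonneg_left hyx hα.le) hx.le
    have h2 : ‖T (‖y‖⁻¹ • y)‖ = ‖y‖⁻¹ * ‖T y‖ := by
      rw [map_smul, norm_smul, norm_inv, norm_norm]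
    rw [h2, ← div_eq_inv_mul, le_div_iff₀ hypos]
    exact hαy

/-- Lewis's lemma: if `T : H → X` (H Hilbert, X normed) has `n`-th approximation number
`a_n(T) > α > 0`, then there is an orthonormal family `(w_j)_{j=1}^n` in `H` with
`‖T w_j‖ ≥ α` for every `j`. -/
theorem stmt11 {H : Type*} [NormedAddCommGroup H] [InnerProductSpace ℝ H] [CompleteSpace H]
    {X : Type*} [NormedAddCommGroup X] [NormedSpace ℝ X]
    (T : H →L[ℝ] X) (n : ℕ) (α : ℝ) (hα : 0 < α)
    (hT : α < sInf {c : ℝ | ∃ S : H →L[ℝ] X,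
      LinearMap.rank (S : H →ₗ[ℝ] X) < (n : Cardinal) ∧ c = ‖T - S‖}) :
    ∃ w : Fin n → H, Orthonormal ℝ w ∧ ∀ j, α ≤ ‖T (w j)‖ := by
  suffices h : ∀ m, m ≤ n → ∃ w : Fin m → H, Orthonormal ℝ w ∧ ∀ j, α ≤ ‖T (w j)‖ from
    h n le_rfl
  intro m
  induction m with
  | zero =>
    exact fun _ => ⟨fun i => i.elim0, ⟨fun i => i.elim0, fun i => i.elim0⟩, fun i => i.elim0⟩
  | succ m ih =>
    intro hm
    obtain ⟨w, hw, hwT⟩ := ih (le_of_lt (Nat.lt_of_succ_le hm))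
    obtain ⟨u, hu1, huo, hTu⟩ :=
      stmt11_step T n α hα hT m (Nat.lt_of_succ_le hm) w hw hwT
    refine ⟨Fin.snoc w u, ⟨?_, ?_⟩, ?_⟩
    · intro i
      refine Fin.lastCases ?_ (fun i => ?_) i
      · simpa using hu1
      · simpa using hw.1 i
    · intro i j
      refine Fin.lastCases ?_ (fun i' => ?_) i
      · refine Fin.lastCases ?_ (fun j' => ?_) j
        · intro h; exact absurd rfl h
        · intro _
          rw [Fin.snoc_last, Fin.snoc_castSucc, real_inner_comm]
          exact huo j'
      · refine Fin.lastCases ?_ (fun j' => ?_) j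
        · intro _
          rw [Fin.snoc_last, Fin.snoc_castSucc]
          exact huo i'
        · intro h
          rw [Fin.snoc_castSucc, Fin.snoc_castSucc]
          exact hw.2 (fun e => h (by rw [e]))
    · intro j
      refine Fin.lastCases ?_ (fun j' => ?_) j
      · simpa using hTu
      · simpa using hwT j'
end

section
/- Let X, Y be normed spaces and T : X → Y linear and bounded. Suppose x₁,…,x_n ∈ X and ρ ∈ (0,1] satisfy sup_{y*∈B_{Y*}} ∑_{j=1}^n |⟨y*, T x_j⟩|² ≤ 1 and ‖T x_j‖ ≥ ρ for each j. Let u := ∑_j e_j ⊗ x_j : ℓ₂^n → X and, for norming functionals y_j* with ⟨y_j*, Tx_j⟩ = ‖Tx_j‖, let v := ∑_j y_j* ⊗ e_j : Y → ℓ_∞^n. Then ‖v‖ ≤ 1, ‖T u‖ ≤ 1, and π₂(v T u) ≥ ρ √n, where π₂ is the 2-summing norm. -/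
/-- Setup for Proposition 1.3: if `sup_{y*∈B_{Y*}} ∑_j ⟨y*,Tx_j⟩² ≤ 1` and `‖Tx_j‖ ≥ ρ`,
then with `u = ∑ e_j ⊗ x_j : ℓ₂ⁿ → X` and `v = ∑ y_j* ⊗ e_j : Y → ℓ_∞ⁿ` (built from
norming functionals `y_j*`), one has `‖v‖ ≤ 1`, `‖Tu‖ ≤ 1`, and `π₂(vTu) ≥ ρ√n`.
The 2-summing lower bound is expressed as: every upper bound `c` for the quantities
`(∑_k ‖vTu a_k‖²)^{1/2}` over weak-`ℓ₂` unit families `(a_k)` satisfies `ρ√n ≤ c`. -/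
theorem stmt16 {X Y : Type*} [NormedAddCommGroup X] [NormedSpace ℝ X]
    [NormedAddCommGroup Y] [NormedSpace ℝ Y]
    (T : X →L[ℝ] Y) (n : ℕ) (hn : 1 ≤ n) (x : Fin n → X) (ρ : ℝ)
    (hρ0 : 0 < ρ) (hρ1 : ρ ≤ 1)
    (hweak : ∀ f : Y →L[ℝ] ℝ, ‖f‖ ≤ 1 → ∑ j, (f (T (x j))) ^ 2 ≤ 1)
    (hbelow : ∀ j, ρ ≤ ‖T (x j)‖)
    (y : Fin n → (Y →L[ℝ] ℝ)) (hy : ∀ j, ‖y j‖ ≤ 1)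
    (hynorm : ∀ j, y j (T (x j)) = ‖T (x j)‖)
    (u : EuclideanSpace ℝ (Fin n) →L[ℝ] X)
    (hu : ∀ a : EuclideanSpace ℝ (Fin n), u a = ∑ j, a j • x j)
    (v : Y →L[ℝ] (Fin n → ℝ))
    (hv : ∀ (w : Y) (j : Fin n), v w j = y j w) :
    ‖v‖ ≤ 1 ∧ ‖T.comp u‖ ≤ 1 ∧
    (∀ c : ℝ,
      (∀ (m : ℕ) (a : Fin m → EuclideanSpace ℝ (Fin n)),
        (∀ f : EuclideanSpace ℝ (Fin n) →L[ℝ] ℝ, ‖f‖ ≤ 1 → ∑ k, (f (a k)) ^ 2 ≤ 1) →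
        Real.sqrt (∑ k, ‖(v.comp (T.comp u)) (a k)‖ ^ 2) ≤ c) →
      ρ * Real.sqrt n ≤ c) := by
  have hue : ∀ j : Fin n, u (EuclideanSpace.single j 1) = x j := by
    intro j
    rw [hu]
    rw [Finset.sum_eq_single j]
    · simp [EuclideanSpace.single_apply]
    · intro k _ hk
      simp [EuclideanSpace.single_apply, hk]
    · simp
  refine ⟨?_, ?_, ?_⟩
  · -- ‖v‖ ≤ 1
    apply ContinuousLinearMap.opNorm_le_bound _ zero_le_one
    intro w
    rw [one_mul]
    rw [pi_norm_le_iff_of_nonneg (norm_nonneg w)]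
    intro j
    rw [hv]
    calc ‖y j w‖ ≤ ‖y j‖ * ‖w‖ := (y j).le_opNorm w
    _ ≤ 1 * ‖w‖ := by
        apply mul_le_mul_of_nonneg_right (hy j) (norm_nonneg w)
    _ = ‖w‖ := one_mul _
  · -- ‖Tu‖ ≤ 1
    apply ContinuousLinearMap.opNorm_le_bound _ zero_le_one
    intro a
    rw [one_mul]
    simp only [ContinuousLinearMap.comp_apply]
    by_cases hz : T (u a) = 0
    · rw [hz, norm_zero]; exact norm_nonneg a
    obtain ⟨g, hg1, hg2⟩ := exists_dual_vector ℝ (T (u a)) (norm_ne_zero_iff.mpr hz)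
    have hrep : ‖T (u a)‖ = ∑ j, a j * g (T (x j)) := by
      have : (‖T (u a)‖ : ℝ) = g (T (u a)) := by
        have := hg2
        simpa using this.symm
      rw [this, hu]
      simp [Finset.mul_sum, mul_comm]
    set b : EuclideanSpace ℝ (Fin n) := WithLp.toLp 2 (fun j => g (T (x j))) with hb
    have hcs : ∑ j, a j * g (T (x j)) ≤ ‖a‖ * ‖b‖ := by
      have : ∑ j, a j * g (T (x j)) = @inner ℝ _ _ a b := by
        rw [PiLp.inner_apply]
        simp [hb, RCLike.inner_apply, mul_comm]
      rw [this]
      exact real_inner_le_norm a b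
    have hbnorm : ‖b‖ ≤ 1 := by
      have hsum : ∑ j, (g (T (x j))) ^ 2 ≤ 1 := hweak g (le_of_eq hg1)
      rw [EuclideanSpace.norm_eq]
      have : ∑ j, ‖b j‖ ^ 2 = ∑ j, (g (T (x j))) ^ 2 := by
        simp [hb, sq_abs]
      rw [this]
      calc Real.sqrt (∑ j, (g (T (x j))) ^ 2) ≤ Real.sqrt 1 :=
            Real.sqrt_le_sqrt hsum
      _ = 1 := Real.sqrt_one
    calc ‖T (u a)‖ = ∑ j, a j * g (T (x j)) := hrep
    _ ≤ ‖a‖ * ‖b‖ := hcs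
    _ ≤ ‖a‖ * 1 := mul_le_mul_of_nonneg_left hbnorm (norm_nonneg a)
    _ = ‖a‖ := mul_one _
  · -- 2-summing lower bound
    intro c hc
    have key := hc n (fun k => EuclideanSpace.single k 1) ?_
    · refine le_trans ?_ key
      have hterm : ∀ j : Fin n,
          ρ ^ 2 ≤ ‖(v.comp (T.comp u)) (EuclideanSpace.single j 1)‖ ^ 2 := by
        intro j
        have h1 : ρ ≤ ‖(v.comp (T.comp u)) (EuclideanSpace.single j 1)‖ := by
          have h2 : ρ ≤ ‖v (T (x j)) j‖ := by
            rw [hv, hynorm]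
            calc ρ ≤ ‖T (x j)‖ := hbelow j
            _ ≤ ‖(‖T (x j)‖)‖ := le_abs_self _
          calc ρ ≤ ‖v (T (x j)) j‖ := h2
          _ ≤ ‖v (T (x j))‖ := norm_le_pi_norm _ j
          _ = ‖(v.comp (T.comp u)) (EuclideanSpace.single j 1)‖ := by
              simp [ContinuousLinearMap.comp_apply, hue j]
        exact pow_le_pow_left₀ hρ0.le h1 2
      have hsum : (n : ℝ) * ρ ^ 2 ≤
          ∑ j, ‖(v.comp (T.comp u)) (EuclideanSpace.single j 1)‖ ^ 2 := by
        calc (n : ℝ) * ρ ^ 2 = ∑ _j : Fin n, ρ ^ 2 := by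
              simp [Finset.sum_const, mul_comm]
        _ ≤ _ := Finset.sum_le_sum (fun j _ => hterm j)
      have : ρ * Real.sqrt n = Real.sqrt ((n : ℝ) * ρ ^ 2) := by
        rw [Real.sqrt_mul (Nat.cast_nonneg n), Real.sqrt_sq hρ0.le, mul_comm]
      rw [this]
      exact Real.sqrt_le_sqrt hsum
    · -- weak ℓ₂ condition for the standard basis
      intro f hf
      set b : EuclideanSpace ℝ (Fin n) := WithLp.toLp 2 (fun k => f (EuclideanSpace.single k 1)) with hb
      have hfb : f b = ∑ k, (f (EuclideanSpace.single k 1)) ^ 2 := by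
        have hbsum : b = ∑ k, b k • EuclideanSpace.single k 1 := by
          ext j
          rw [WithLp.ofLp_sum, Finset.sum_apply]
          rw [Finset.sum_eq_single j]
          · simp [EuclideanSpace.single_apply]
          · intro k _ hk
            simp [EuclideanSpace.single_apply, Ne.symm hk]
          · simp
        conv_lhs => rw [hbsum]
        rw [map_sum]
        simp [hb, sq, map_smul, smul_eq_mul]
      have hnb : ‖b‖ = Real.sqrt (∑ k, (f (EuclideanSpace.single k 1)) ^ 2) := by
        rw [EuclideanSpace.norm_eq]
        congr 1
        refine Finset.sum_congr rfl (fun k _ => ?_)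
        simp [hb, sq_abs]
      have h1 : ∑ k, (f (EuclideanSpace.single k 1)) ^ 2 ≤ ‖b‖ := by
        rw [← hfb]
        calc f b ≤ ‖f b‖ := le_abs_self _
        _ ≤ ‖f‖ * ‖b‖ := f.le_opNorm b
        _ ≤ 1 * ‖b‖ := mul_le_mul_of_nonneg_right hf (norm_nonneg b)
        _ = ‖b‖ := one_mul _
      -- from S ≤ sqrt S, deduce S ≤ 1
      set S := ∑ k, (f (EuclideanSpace.single k 1)) ^ 2 with hS
      have hS0 : 0 ≤ S := Finset.sum_nonneg (fun k _ => sq_nonneg _)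
      have h2 : S ≤ Real.sqrt S := by rw [← hnb]; exact h1
      nlinarith [Real.sq_sqrt hS0, Real.sqrt_nonneg S]
end

section
/- Let H be a Hilbert space, X a normed space, v : X → H a 2-summing operator, and m ≥ 1. Then the m-th Weyl number satisfies x_m(v) ≤ m^{−1/2} π₂(v). -/
open Submodule

/-- Weyl number estimate for 2-summing operators into a Hilbert space:
if `v : X → H` is 2-summing with constant `C` (i.e. `∑ ‖v a_k‖² ≤ C²` for every
weak-`ℓ₂` unit family `(a_k)` in `X`), then for every `m ≥ 1` the `m`-th Weyl number
satisfies `x_m(v) ≤ m^{-1/2} C`: for every Hilbert space `G` and every `u : G → X`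
with `‖u‖ ≤ 1`, the `m`-th approximation number of `v ∘ u` is at most `C/√m`. -/
theorem stmt17 {X : Type*} [NormedAddCommGroup X] [NormedSpace ℝ X]
    {H : Type*} [NormedAddCommGroup H] [InnerProductSpace ℝ H] [CompleteSpace H]
    (v : X →L[ℝ] H) (C : ℝ) (hC : 0 ≤ C)
    (h2sum : ∀ (N : ℕ) (a : Fin N → X),
      (∀ f : X →L[ℝ] ℝ, ‖f‖ ≤ 1 → ∑ k, (f (a k)) ^ 2 ≤ 1) →
      ∑ k, ‖v (a k)‖ ^ 2 ≤ C ^ 2)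
    (m : ℕ) (hm : 1 ≤ m) :
    ∀ (G : Type*) [NormedAddCommGroup G] [InnerProductSpace ℝ G] [CompleteSpace G],
      ∀ u : G →L[ℝ] X, ‖u‖ ≤ 1 →
        sInf {c : ℝ | ∃ S : G →L[ℝ] H,
            LinearMap.rank (S : G →ₗ[ℝ] H) < (m : Cardinal) ∧ c = ‖v.comp u - S‖} ≤
          C / Real.sqrt m := by
  intro G _ _ _ u hu
  set w : G →L[ℝ] H := v.comp u with hw
  set A : Set ℝ := {c : ℝ | ∃ S : G →L[ℝ] H,
      LinearMap.rank (S : G →ₗ[ℝ] H) < (m : Cardinal) ∧ c = ‖v.comp u - S‖} with hA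
  set c : ℝ := C / Real.sqrt m with hcdef
  have hsm : (0:ℝ) < Real.sqrt m := Real.sqrt_pos.mpr (by exact_mod_cast hm)
  have hc : 0 ≤ c := div_nonneg hC (Real.sqrt_nonneg _)
  have hbdd : BddBelow A := ⟨0, fun x hx => by obtain ⟨S, _, rfl⟩ := hx; exact norm_nonneg _⟩
  by_contra hlt
  push_neg at hlt
  -- weak ℓ₂ condition from orthonormality
  have hweak : ∀ (j : ℕ) (e : Fin j → G), Orthonormal ℝ e →
      ∀ f : X →L[ℝ] ℝ, ‖f‖ ≤ 1 → ∑ k, (f (u (e k))) ^ 2 ≤ 1 := by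
    intro j e he f hf
    set g : G := (InnerProductSpace.toDual ℝ G).symm (f.comp u) with hg
    have hgn : ‖g‖ ≤ 1 := by
      have h1 : ‖g‖ = ‖f.comp u‖ := LinearIsometryEquiv.norm_map _ _
      have h2 : ‖f.comp u‖ ≤ ‖f‖ * ‖u‖ := ContinuousLinearMap.opNorm_comp_le _ _
      have h3 : ‖f‖ * ‖u‖ ≤ 1 := by
        calc ‖f‖ * ‖u‖ ≤ 1 * 1 := mul_le_mul hf hu (norm_nonneg _) zero_le_one
          _ = 1 := one_mul 1
      linarith [h1 ▸ h2.trans h3]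
    have hb : ∑ k, ‖(inner ℝ (e k) g : ℝ)‖ ^ 2 ≤ ‖g‖ ^ 2 := he.sum_inner_products_le g
    have heq : ∀ k, (f (u (e k))) ^ 2 = ‖(inner ℝ (e k) g : ℝ)‖ ^ 2 := by
      intro k
      have h1 : (inner ℝ g (e k) : ℝ) = f (u (e k)) := InnerProductSpace.toDual_symm_apply
      rw [← h1, real_inner_comm (e k) g, Real.norm_eq_abs, sq_abs]
    calc ∑ k, (f (u (e k))) ^ 2 = ∑ k, ‖(inner ℝ (e k) g : ℝ)‖ ^ 2 := by
          exact Finset.sum_congr rfl fun k _ => heq k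
      _ ≤ ‖g‖ ^ 2 := hb
      _ ≤ 1 ^ 2 := by
          exact pow_le_pow_left₀ (norm_nonneg _) hgn 2
      _ = 1 := one_pow 2
  -- greedy construction of an orthonormal family on which w is large
  have key : ∀ j, j ≤ m → ∃ e : Fin j → G, Orthonormal ℝ e ∧ ∀ k, c < ‖w (e k)‖ := by
    intro j
    induction j with
    | zero =>
      intro _
      exact ⟨Fin.elim0, ⟨fun i => i.elim0, fun i => i.elim0⟩, fun k => k.elim0⟩
    | succ j ih =>
      intro hjm
      obtain ⟨e, he, hwe⟩ := ih (Nat.le_of_succ_le hjm)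
      set W : Submodule ℝ G := Submodule.span ℝ (Set.range e) with hWdef
      haveI : FiniteDimensional ℝ W := FiniteDimensional.span_of_finite ℝ (Set.finite_range e)
      have hstep : ∃ x ∈ Wᗮ, c * ‖x‖ < ‖w x‖ := by
        by_contra hcon
        push_neg at hcon
        set T : G →L[ℝ] G := W.subtypeL.comp (orthogonalProjection W) with hT
        set S : G →L[ℝ] H := w.comp T with hS
        have hrank : LinearMap.rank (S : G →ₗ[ℝ] H) < (m : Cardinal) := by
          have hsub : LinearMap.range (S : G →ₗ[ℝ] H) ≤
              Submodule.span ℝ (Set.range (fun k => w (e k))) := by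
            rintro z hz
            obtain ⟨g, rfl⟩ := hz
            have hmem : ((orthogonalProjection W g : G)) ∈ W := (orthogonalProjection W g).2
            have hap := Submodule.apply_mem_span_image_of_mem_span
              (w : G →ₗ[ℝ] H) hmem
            have himg : (w : G →ₗ[ℝ] H) '' Set.range e = Set.range (fun k => w (e k)) := by
              rw [← Set.range_comp]
              rfl
            rw [himg] at hap
            simpa [hS, hT] using hap
          have h1 : LinearMap.rank (S : G →ₗ[ℝ] H) ≤ (j : Cardinal) := by
            calc LinearMap.rank (S : G →ₗ[ℝ] H)
                = Module.rank ℝ (LinearMap.range (S : G →ₗ[ℝ] H)) := rfl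
              _ ≤ Module.rank ℝ (Submodule.span ℝ (Set.range (fun k => w (e k)))) :=
                  Submodule.rank_mono hsub
              _ ≤ Cardinal.mk (Set.range (fun k => w (e k))) := rank_span_le _
              _ ≤ (j : Cardinal) := by
                  have h5 := Cardinal.mk_range_le_lift (f := fun k : Fin j => w (e k))
                  simpa [Cardinal.mk_fin] using h5
          have h4 : (j : Cardinal) < (m : Cardinal) := by
            exact_mod_cast Nat.lt_of_succ_le hjm
          exact lt_of_le_of_lt h1 h4
        have hnorm : ‖v.comp u - S‖ ≤ c := by
          apply ContinuousLinearMap.opNorm_le_bound _ hc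
          intro g
          have hmem : g - (orthogonalProjection W g : G) ∈ Wᗮ :=
            Submodule.sub_starProjection_mem_orthogonal (K := W) g
          have h1 : (v.comp u - S) g = w (g - (orthogonalProjection W g : G)) := by
            simp [hS, hT, hw, map_sub]
          have h2 : ‖g - (orthogonalProjection W g : G)‖ ≤ ‖g‖ := by
            rw [show g - (orthogonalProjection W g : G) = (orthogonalProjection Wᗮ g : G) from
              (Submodule.starProjection_orthogonal_val (K := W) g).symm]
            calc ‖(orthogonalProjection Wᗮ g : G)‖ = ‖orthogonalProjection Wᗮ g‖ := rfl
              _ ≤ ‖orthogonalProjection Wᗮ‖ * ‖g‖ := (orthogonalProjection Wᗮ).le_opNorm g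
              _ ≤ 1 * ‖g‖ := by
                  exact mul_le_mul_of_nonneg_right (orthogonalProjection_norm_le _)
                    (norm_nonneg _)
              _ = ‖g‖ := one_mul _
          rw [h1]
          calc ‖w (g - (orthogonalProjection W g : G))‖
              ≤ c * ‖g - (orthogonalProjection W g : G)‖ := hcon _ hmem
            _ ≤ c * ‖g‖ := mul_le_mul_of_nonneg_left h2 hc
        have hmemA : ‖v.comp u - S‖ ∈ A := ⟨S, hrank, rfl⟩
        have := csInf_le hbdd hmemA
        linarith
      obtain ⟨x, hxW, hx⟩ := hstep
      have hx0 : x ≠ 0 := by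
        intro h
        rw [h] at hx
        simp at hx
      have hxn : (0:ℝ) < ‖x‖ := norm_pos_iff.mpr hx0
      set y : G := ‖x‖⁻¹ • x with hy
      have hy1 : ‖y‖ = 1 := by
        rw [hy, norm_smul, norm_inv, norm_norm, inv_mul_cancel₀ hxn.ne']
      have hyW : y ∈ Wᗮ := Submodule.smul_mem _ _ hxW
      have hwy : c < ‖w y‖ := by
        have : ‖w y‖ = ‖x‖⁻¹ * ‖w x‖ := by
          rw [hy, map_smul, norm_smul, norm_inv, norm_norm]
        rw [this]
        calc c = (c * ‖x‖) * ‖x‖⁻¹ := by field_simp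
          _ < ‖w x‖ * ‖x‖⁻¹ := by
              exact mul_lt_mul_of_pos_right hx (inv_pos.mpr hxn)
          _ = ‖x‖⁻¹ * ‖w x‖ := mul_comm _ _
      refine ⟨Fin.snoc e y, ?_, ?_⟩
      · rw [orthonormal_iff_ite]
        intro i k
        refine Fin.lastCases ?_ ?_ i <;> [skip; intro p] <;>
          refine Fin.lastCases ?_ ?_ k
        · simp [Fin.snoc_last, real_inner_self_eq_norm_sq, hy1]
        · intro q
          have hq : (inner ℝ (e q) y : ℝ) = 0 :=
            (Submodule.mem_orthogonal W y).mp hyW _ (Submodule.subset_span ⟨q, rfl⟩)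
          have hne : (Fin.last j) ≠ Fin.castSucc q := (Fin.castSucc_lt_last q).ne'
          simp only [Fin.snoc_last, Fin.snoc_castSucc, if_neg hne]
          rw [real_inner_comm]
          exact hq
        · have hq : (inner ℝ (e p) y : ℝ) = 0 :=
            (Submodule.mem_orthogonal W y).mp hyW _ (Submodule.subset_span ⟨p, rfl⟩)
          have : Fin.castSucc p ≠ (Fin.last j) := (Fin.castSucc_lt_last p).ne
          simp [Fin.snoc_last, Fin.snoc_castSucc, this, hq]
        · intro q
          have := (orthonormal_iff_ite.mp he) p q
          simpa [Fin.snoc_castSucc, Fin.castSucc_inj] using this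
      · intro k
        refine Fin.lastCases ?_ ?_ k
        · simpa [Fin.snoc_last] using hwy
        · intro q
          simpa [Fin.snoc_castSucc] using hwe q
  obtain ⟨e, he, hwe⟩ := key m le_rfl
  have h1 : ∑ k, ‖v (u (e k))‖ ^ 2 ≤ C ^ 2 := h2sum m (fun k => u (e k)) (hweak m e he)
  have h2 : (m:ℝ) * c ^ 2 < ∑ k : Fin m, ‖v (u (e k))‖ ^ 2 := by
    have hne : (Finset.univ : Finset (Fin m)).Nonempty := by
      simpa [Finset.univ_nonempty_iff] using Fin.pos_iff_nonempty.mp (Nat.lt_of_lt_of_le Nat.zero_lt_one hm)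
    have hlt' : ∀ k ∈ (Finset.univ : Finset (Fin m)), c ^ 2 < ‖v (u (e k))‖ ^ 2 := by
      intro k _
      exact pow_lt_pow_left₀ (hwe k) hc two_ne_zero
    calc (m:ℝ) * c ^ 2 = ∑ _k : Fin m, c ^ 2 := by
          simp [Finset.sum_const, Finset.card_univ, nsmul_eq_mul]
      _ < ∑ k : Fin m, ‖v (u (e k))‖ ^ 2 := Finset.sum_lt_sum_of_nonempty hne hlt'
  have h3 : (m:ℝ) * c ^ 2 = C ^ 2 := by
    rw [hcdef, div_pow, Real.sq_sqrt (Nat.cast_nonneg m)]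
    field_simp
  linarith
end

section
/- Let X be a finite-dimensional normed space of dimension n. Then the absolutely 1-summing norm of the identity satisfies π₁(id_X) ≤ n, i.e., for all finite families (x_k) in X one has ∑_k ‖x_k‖ ≤ n · sup_{x* ∈ B_{X*}} ∑_k |⟨x*, x_k⟩|. -/
open Module Metric

/-- Auerbach-type lemma: there is a family `b` of vectors of norm `≤ 1` and functionals `c`
of norm `≤ 1` giving a biorthogonal decomposition of every vector. -/
lemma auerbach_aux {X : Type*} [NormedAddCommGroup X] [NormedSpace ℝ X]
    [FiniteDimensional ℝ X] (n : ℕ) (hdim : Module.finrank ℝ X = n) :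
    ∃ (b : Fin n → X) (c : Fin n → (X →L[ℝ] ℝ)),
      (∀ i, ‖b i‖ ≤ 1) ∧ (∀ i, ‖c i‖ ≤ 1) ∧ ∀ x : X, x = ∑ i, c i x • b i := by
  classical
  let e : Basis (Fin n) ℝ X := Module.finBasisOfFinrankEq ℝ X hdim
  set S : Set (Fin n → X) := Set.pi Set.univ (fun _ => closedBall (0 : X) 1) with hS
  have hScompact : IsCompact S := isCompact_univ_pi fun _ => isCompact_closedBall 0 1
  have hDcont : Continuous fun v : Fin n → X => |e.det v| := by
    have h1 : Continuous fun v : Fin n → X => e.det v := by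
      simp_rw [Basis.det_apply]
      refine Continuous.matrix_det ?_
      refine continuous_matrix fun i j => ?_
      have : Continuous (e.coord i) := (e.coord i).continuous_of_finiteDimensional
      exact this.comp (continuous_apply j)
    exact h1.abs
  have hne : ∀ i, e i ≠ 0 := fun i => e.ne_zero i
  set v0 : Fin n → X := fun i => ‖e i‖⁻¹ • e i with hv0
  have hv0S : v0 ∈ S := by
    intro i _
    simp only [v0, mem_closedBall, dist_zero_right, norm_smul, norm_inv, norm_norm]
    rw [inv_mul_cancel₀ (norm_ne_zero_iff.mpr (hne i))]
  have hdet0 : e.det v0 ≠ 0 := by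
    have h2 : e.det v0 = (∏ i, ‖e i‖⁻¹) • e.det e := by
      simpa [v0] using e.det.toMultilinearMap.map_smul_univ (fun i => ‖e i‖⁻¹) e
    rw [h2, e.det_self, smul_eq_mul, mul_one]
    exact Finset.prod_ne_zero_iff.mpr fun i _ =>
      inv_ne_zero (norm_ne_zero_iff.mpr (hne i))
  obtain ⟨b, hbS, hbmax⟩ := hScompact.exists_isMaxOn ⟨v0, hv0S⟩ hDcont.continuousOn
  have hMpos : 0 < |e.det b| := lt_of_lt_of_le (abs_pos.mpr hdet0) (hbmax hv0S)
  have hdetb : e.det b ≠ 0 := fun h => by simp [h] at hMpos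
  have hbasis := Module.Basis.is_basis_iff_det e (v := b) |>.mpr (isUnit_iff_ne_zero.mpr hdetb)
  let b' : Basis (Fin n) ℝ X := Module.Basis.mk hbasis.1 hbasis.2.ge
  have hb'eq : ∀ i, b' i = b i := fun i => Module.Basis.mk_apply _ _ i
  have hdetrel : ∀ (x : X) (i : Fin n),
      e.det (Function.update b i x) = b'.repr x i * e.det b := by
    intro x i
    have hx : x = ∑ j, b'.repr x j • b j := by
      conv_lhs => rw [← b'.sum_repr x]
      exact Finset.sum_congr rfl fun j _ => by rw [hb'eq]
    conv_lhs => rw [hx]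
    show e.det.toMultilinearMap (Function.update b i (∑ j, b'.repr x j • b j)) = _
    rw [e.det.toMultilinearMap.map_update_sum Finset.univ i (fun j => b'.repr x j • b j)]
    rw [Finset.sum_eq_single i]
    · rw [MultilinearMap.map_update_smul, Function.update_eq_self, smul_eq_mul]
      rfl
    · intro j _ hj
      have h0 : e.det.toMultilinearMap (Function.update b i (b j)) = 0 :=
        e.det.map_eq_zero_of_eq _
          (by rw [Function.update_self, Function.update_of_ne hj]) (Ne.symm hj)
      rw [MultilinearMap.map_update_smul, h0, smul_zero]
    · intro h; exact absurd (Finset.mem_univ i) h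
  have hcoord : ∀ (x : X) (i : Fin n), |b'.repr x i| ≤ ‖x‖ := by
    intro x i
    rcases eq_or_ne x 0 with rfl | hx
    · simp
    · have hxn : ‖x‖ ≠ 0 := norm_ne_zero_iff.mpr hx
      set u : X := ‖x‖⁻¹ • x with hu
      have huS : Function.update b i u ∈ S := by
        intro j _
        rcases eq_or_ne j i with rfl | hj
        · simp only [Function.update_self, mem_closedBall, dist_zero_right, u,
            norm_smul, norm_inv, norm_norm]
          rw [inv_mul_cancel₀ hxn]
        · rw [Function.update_of_ne hj]
          exact hbS j (Set.mem_univ j)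
      have hle : |e.det (Function.update b i u)| ≤ |e.det b| := hbmax huS
      have hdetu : e.det (Function.update b i u) = ‖x‖⁻¹ * e.det (Function.update b i x) := by
        show e.det.toMultilinearMap (Function.update b i (‖x‖⁻¹ • x)) = _
        rw [MultilinearMap.map_update_smul, smul_eq_mul]
        rfl
      rw [hdetu, hdetrel x i, abs_mul, abs_mul,
        abs_of_nonneg (inv_nonneg.mpr (norm_nonneg x))] at hle
      have h2 : |b'.repr x i| * |e.det b| ≤ ‖x‖ * |e.det b| := by
        calc |b'.repr x i| * |e.det b|
            = ‖x‖ * ‖x‖⁻¹ * (|b'.repr x i| * |e.det b|) := by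
              rw [mul_inv_cancel₀ hxn, one_mul]
          _ = ‖x‖ * (‖x‖⁻¹ * (|b'.repr x i| * |e.det b|)) := mul_assoc _ _ _
          _ ≤ ‖x‖ * |e.det b| := mul_le_mul_of_nonneg_left hle (norm_nonneg x)
      exact le_of_mul_le_mul_right h2 hMpos
  refine ⟨b, fun i => LinearMap.toContinuousLinearMap (b'.coord i), ?_, ?_, ?_⟩
  · intro i
    have := hbS i (Set.mem_univ i)
    simpa [mem_closedBall, dist_zero_right] using this
  · intro i
    refine ContinuousLinearMap.opNorm_le_bound _ zero_le_one fun x => ?_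
    rw [one_mul]
    simpa [Real.norm_eq_abs, Basis.coord_apply] using hcoord x i
  · intro x
    conv_lhs => rw [← b'.sum_repr x]
    exact Finset.sum_congr rfl fun i _ => by
      rw [hb'eq]; simp [Basis.coord_apply]

/-- For an `n`-dimensional normed space `X`, the 1-summing norm of the identity is at
most `n`: for every finite family `(x_k)` in `X`,
`∑_k ‖x_k‖ ≤ n · sup_{x* ∈ B_{X*}} ∑_k |⟨x*, x_k⟩|`. -/
theorem stmt19 {X : Type*} [NormedAddCommGroup X] [NormedSpace ℝ X]
    [FiniteDimensional ℝ X] (n : ℕ) (hdim : Module.finrank ℝ X = n) :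
    ∀ (m : ℕ) (x : Fin m → X),
      ∑ k, ‖x k‖ ≤ (n : ℝ) * ⨆ f : {f : X →L[ℝ] ℝ // ‖f‖ ≤ 1}, ∑ k, |f.1 (x k)| := by
  intro m x
  obtain ⟨b, c, hb, hc, hrep⟩ := auerbach_aux n hdim
  set s : ℝ := ⨆ f : {f : X →L[ℝ] ℝ // ‖f‖ ≤ 1}, ∑ k, |f.1 (x k)| with hs
  have hbdd : BddAbove (Set.range fun f : {f : X →L[ℝ] ℝ // ‖f‖ ≤ 1} =>
      ∑ k, |f.1 (x k)|) := by
    refine ⟨∑ k, ‖x k‖, ?_⟩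
    rintro _ ⟨f, rfl⟩
    refine Finset.sum_le_sum fun k _ => ?_
    calc |f.1 (x k)| ≤ ‖f.1‖ * ‖x k‖ := f.1.le_opNorm _
      _ ≤ 1 * ‖x k‖ := mul_le_mul_of_nonneg_right f.2 (norm_nonneg _)
      _ = ‖x k‖ := one_mul _
  have hle : ∀ i : Fin n, ∑ k, |(c i) (x k)| ≤ s :=
    fun i => le_ciSup hbdd ⟨c i, hc i⟩
  calc ∑ k, ‖x k‖ ≤ ∑ k, ∑ i, |(c i) (x k)| := by
        refine Finset.sum_le_sum fun k _ => ?_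
        calc ‖x k‖ = ‖∑ i, (c i) (x k) • b i‖ := by rw [← hrep (x k)]
          _ ≤ ∑ i, ‖(c i) (x k) • b i‖ := norm_sum_le _ _
          _ ≤ ∑ i, |(c i) (x k)| := by
              refine Finset.sum_le_sum fun i _ => ?_
              rw [norm_smul, Real.norm_eq_abs]
              exact mul_le_of_le_one_right (abs_nonneg _) (hb i)
    _ = ∑ i, ∑ k, |(c i) (x k)| := Finset.sum_comm
    _ ≤ ∑ _i : Fin n, s := Finset.sum_le_sum fun i _ => hle i
    _ = (n : ℝ) * s := by simp [Finset.sum_const, nsmul_eq_mul]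
end
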